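/- Let a, b, a', b', a'', b'' ∈ [0,1]. There exist t ∈ [0,1] and distributions P, P', P'' on (ZMod 2)^2 with (d₂P, d₁P, d₀P) = (a, b, t), (d₂P', d₁P', d₀P') = (a', b', t), and (d₂P'', d₁P'', d₀P'') = (a'', b'', t) if and only if each of the three pairs (a,b),(a',b'); (a,b),(a'',b''); and (a',b'),(a'',b'') satisfies the four CHSH inequalities 0 ≤ u + v + u' − v' ≤ 2, 0 ≤ u + v − u' + v' ≤ 2, 0 ≤ u − v + u' + v' ≤ 2, 0 ≤ −u + v + u' + v' ≤ 2 (with (u,v) and (u',v') the two pairs in question). This says that a simplicial probability distribution on the boundary of the space obtained by gluing two diamonds along a 2-simplex extends to the whole space precisely when the CHSH inequalities hold for all three diamonds it contains. -/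
import Mathlib

open Finset

/-- A distribution on `(ZMod 2)²`: nonnegative with total mass 1. -/
def IsDist2 (p : ZMod 2 → ZMod 2 → ℝ) : Prop :=
  (∀ a b, 0 ≤ p a b) ∧ (∑ a : ZMod 2, ∑ b : ZMod 2, p a b = 1)

/-- The `d₀` edge marginal (at outcome `0`) of a distribution on a triangle. -/
def faceD0 (p : ZMod 2 → ZMod 2 → ℝ) : ℝ := p 0 0 + p 1 0

/-- The `d₁` edge marginal (at outcome `0`) of a distribution on a triangle. -/
def faceD1 (p : ZMod 2 → ZMod 2 → ℝ) : ℝ := p 0 0 + p 1 1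

/-- The `d₂` edge marginal (at outcome `0`) of a distribution on a triangle. -/
def faceD2 (p : ZMod 2 → ZMod 2 → ℝ) : ℝ := p 0 0 + p 0 1

/-- The four CHSH inequalities for the pair of pairs `(u, v)` and `(u', v')`. -/
def CHSHIneqs (u v u' v' : ℝ) : Prop :=
  (0 ≤ u + v + u' - v' ∧ u + v + u' - v' ≤ 2) ∧
  (0 ≤ u + v - u' + v' ∧ u + v - u' + v' ≤ 2) ∧
  (0 ≤ u - v + u' + v' ∧ u - v + u' + v' ≤ 2) ∧
  (0 ≤ -u + v + u' + v' ∧ -u + v + u' + v' ≤ 2)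

lemma zmod2_cases : ∀ z : ZMod 2, z = 0 ∨ z = 1 := by decide

lemma sum_zmod2 (f : ZMod 2 → ℝ) : ∑ x : ZMod 2, f x = f 0 + f 1 := by
  rw [show (Finset.univ : Finset (ZMod 2)) = {0, 1} from rfl]
  rw [Finset.sum_insert (by decide), Finset.sum_singleton]

lemma tri_ineqs (P : ZMod 2 → ZMod 2 → ℝ) (h : IsDist2 P) :
    1 ≤ faceD2 P + faceD1 P + faceD0 P ∧ faceD2 P + faceD1 P ≤ 1 + faceD0 P ∧
    faceD2 P + faceD0 P ≤ 1 + faceD1 P ∧ faceD1 P + faceD0 P ≤ 1 + faceD2 P := by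
  obtain ⟨hpos, hsum⟩ := h
  rw [sum_zmod2, sum_zmod2, sum_zmod2] at hsum
  have h00 := hpos 0 0
  have h01 := hpos 0 1
  have h10 := hpos 1 0
  have h11 := hpos 1 1
  unfold faceD0 faceD1 faceD2
  refine ⟨by linarith, by linarith, by linarith, by linarith⟩

lemma exists_tri (a b t : ℝ) (h1 : 1 ≤ a + b + t) (h2 : a + b ≤ 1 + t)
    (h3 : a + t ≤ 1 + b) (h4 : b + t ≤ 1 + a) :
    ∃ P : ZMod 2 → ZMod 2 → ℝ, IsDist2 P ∧ faceD2 P = a ∧ faceD1 P = b ∧ faceD0 P = t := by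
  set x := (a + b + t - 1) / 2 with hx
  refine ⟨fun i j => if i = 0 then (if j = 0 then x else a - x)
    else (if j = 0 then t - x else b - x), ⟨?_, ?_⟩, ?_, ?_, ?_⟩
  · intro i j
    rcases zmod2_cases i with hi | hi <;> rcases zmod2_cases j with hj | hj <;>
      subst hi <;> subst hj <;> simp <;> linarith
  · rw [sum_zmod2, sum_zmod2, sum_zmod2]
    norm_num
    try ring
  · unfold faceD2; norm_num; try ring
  · unfold faceD1; norm_num; try ring
  · unfold faceD0; norm_num; try ring

/-- **Extension to two diamonds glued along a 2-simplex.**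
For `a, b, a', b', a'', b'' ∈ [0,1]`: there is a common value `t ∈ [0,1]` and three
distributions on `(ZMod 2)²` with data `(d₂, d₁, d₀) = (a, b, t)`, `(a', b', t)`,
`(a'', b'', t)` iff each of the three pairs of pairs satisfies the CHSH inequalities. -/
theorem two_diamonds_extension_iff_three_CHSH (a b a' b' a'' b'' : ℝ)
    (ha : a ∈ Set.Icc (0 : ℝ) 1) (hb : b ∈ Set.Icc (0 : ℝ) 1)
    (ha' : a' ∈ Set.Icc (0 : ℝ) 1) (hb' : b' ∈ Set.Icc (0 : ℝ) 1)
    (ha'' : a'' ∈ Set.Icc (0 : ℝ) 1) (hb'' : b'' ∈ Set.Icc (0 : ℝ) 1) :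
    (∃ t ∈ Set.Icc (0 : ℝ) 1, ∃ P P' P'' : ZMod 2 → ZMod 2 → ℝ,
      IsDist2 P ∧ IsDist2 P' ∧ IsDist2 P'' ∧
      faceD2 P = a ∧ faceD1 P = b ∧ faceD0 P = t ∧
      faceD2 P' = a' ∧ faceD1 P' = b' ∧ faceD0 P' = t ∧
      faceD2 P'' = a'' ∧ faceD1 P'' = b'' ∧ faceD0 P'' = t) ↔
    (CHSHIneqs a b a' b' ∧ CHSHIneqs a b a'' b'' ∧ CHSHIneqs a' b' a'' b'') := by
  obtain ⟨ha0, ha1⟩ := ha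
  obtain ⟨hb0, hb1⟩ := hb
  obtain ⟨ha'0, ha'1⟩ := ha'
  obtain ⟨hb'0, hb'1⟩ := hb'
  obtain ⟨ha''0, ha''1⟩ := ha''
  obtain ⟨hb''0, hb''1⟩ := hb''
  constructor
  · rintro ⟨t, ht, P, P', P'', hP, hP', hP'', e2, e1, e0, e2', e1', e0', e2'', e1'', e0''⟩
    obtain ⟨i1, i2, i3, i4⟩ := tri_ineqs P hP
    obtain ⟨j1, j2, j3, j4⟩ := tri_ineqs P' hP'
    obtain ⟨k1, k2, k3, k4⟩ := tri_ineqs P'' hP''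
    rw [e2, e1, e0] at i1 i2 i3 i4
    rw [e2', e1', e0'] at j1 j2 j3 j4
    rw [e2'', e1'', e0''] at k1 k2 k3 k4
    refine ⟨⟨⟨?_, ?_⟩, ⟨?_, ?_⟩, ⟨?_, ?_⟩, ⟨?_, ?_⟩⟩,
      ⟨⟨?_, ?_⟩, ⟨?_, ?_⟩, ⟨?_, ?_⟩, ⟨?_, ?_⟩⟩,
      ⟨⟨?_, ?_⟩, ⟨?_, ?_⟩, ⟨?_, ?_⟩, ⟨?_, ?_⟩⟩⟩ <;> linarith
  · rintro ⟨⟨⟨c1, c2⟩, ⟨c3, c4⟩, ⟨c5, c6⟩, ⟨c7, c8⟩⟩,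
      ⟨⟨d1, d2⟩, ⟨d3, d4⟩, ⟨d5, d6⟩, ⟨d7, d8⟩⟩,
      ⟨⟨e1, e2⟩, ⟨e3, e4⟩, ⟨e5, e6⟩, ⟨e7, e8⟩⟩⟩
    set t := max (max (a + b - 1) (1 - a - b))
      (max (max (a' + b' - 1) (1 - a' - b')) (max (a'' + b'' - 1) (1 - a'' - b''))) with htdef
    have t1 : a + b - 1 ≤ t := le_trans (le_max_left _ _) (le_max_left _ _)
    have t2 : 1 - a - b ≤ t := le_trans (le_max_right _ _) (le_max_left _ _)
    have t3 : a' + b' - 1 ≤ t :=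
      le_trans (le_trans (le_max_left _ _) (le_max_left _ _)) (le_max_right _ _)
    have t4 : 1 - a' - b' ≤ t :=
      le_trans (le_trans (le_max_right _ _) (le_max_left _ _)) (le_max_right _ _)
    have t5 : a'' + b'' - 1 ≤ t :=
      le_trans (le_trans (le_max_left _ _) (le_max_right _ _)) (le_max_right _ _)
    have t6 : 1 - a'' - b'' ≤ t :=
      le_trans (le_trans (le_max_right _ _) (le_max_right _ _)) (le_max_right _ _)
    have hub : ∀ X : ℝ, a + b - 1 ≤ X → 1 - a - b ≤ X → a' + b' - 1 ≤ X → 1 - a' - b' ≤ X →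
        a'' + b'' - 1 ≤ X → 1 - a'' - b'' ≤ X → t ≤ X := by
      intro X u1 u2 u3 u4 u5 u6
      exact max_le (max_le u1 u2) (max_le (max_le u3 u4) (max_le u5 u6))
    have ht0 : 0 ≤ t := by linarith
    have ht1 : t ≤ 1 := hub 1 (by linarith) (by linarith) (by linarith) (by linarith)
      (by linarith) (by linarith)
    have htA : t ≤ 1 + b - a := hub _ (by linarith) (by linarith) (by linarith) (by linarith)
      (by linarith) (by linarith)
    have htB : t ≤ 1 + a - b := hub _ (by linarith) (by linarith) (by linarith) (by linarith)
      (by linarith) (by linarith)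
    have htA' : t ≤ 1 + b' - a' := hub _ (by linarith) (by linarith) (by linarith) (by linarith)
      (by linarith) (by linarith)
    have htB' : t ≤ 1 + a' - b' := hub _ (by linarith) (by linarith) (by linarith) (by linarith)
      (by linarith) (by linarith)
    have htA'' : t ≤ 1 + b'' - a'' := hub _ (by linarith) (by linarith) (by linarith)
      (by linarith) (by linarith) (by linarith)
    have htB'' : t ≤ 1 + a'' - b'' := hub _ (by linarith) (by linarith) (by linarith)
      (by linarith) (by linarith) (by linarith)
    obtain ⟨P, hP, f2, f1, f0⟩ := exists_tri a b t (by linarith) (by linarith)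
      (by linarith) (by linarith)
    obtain ⟨P', hP', g2, g1, g0⟩ := exists_tri a' b' t (by linarith) (by linarith)
      (by linarith) (by linarith)
    obtain ⟨P'', hP'', m2, m1, m0⟩ := exists_tri a'' b'' t (by linarith) (by linarith)
      (by linarith) (by linarith)
    exact ⟨t, ⟨ht0, ht1⟩, P, P', P'', hP, hP', hP'', f2, f1, f0, g2, g1, g0, m2, m1, m0⟩
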